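/- For every dimension d ≥ 2, every parallelepiped P in ℝ^d (i.e., P = p + {∑_i t_i b_i : t_i ∈ [0,1]} for some point p and some basis (b_1,…,b_d) of ℝ^d), and every finite family F of positive homothets of P, τ(F) ≤ 2^d · ν(F). -/

import Mathlib

open Pointwise

lemma mem_homothet_iff (d : ℕ) (b : Module.Basis (Fin d) ℝ (EuclideanSpace ℝ (Fin d)))
    (p : EuclideanSpace ℝ (Fin d))
    (P : Set (EuclideanSpace ℝ (Fin d)))
    (hP : P = {x | ∃ t : Fin d → ℝ, (∀ i, t i ∈ Set.Icc (0 : ℝ) 1) ∧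
            x = p + ∑ i, t i • b i})
    (lam : ℝ) (hlam : 0 < lam) (v x : EuclideanSpace ℝ (Fin d)) :
    x ∈ v +ᵥ lam • P ↔ ∀ i, b.equivFun (v + lam • p) i ≤ b.equivFun x i ∧
      b.equivFun x i ≤ b.equivFun (v + lam • p) i + lam := by
  have hmem : x ∈ v +ᵥ lam • P ↔ ∃ y ∈ P, v + lam • y = x := by
    simp [Set.mem_vadd_set, Set.mem_smul_set]
  rw [hmem, hP]
  constructor
  · rintro ⟨y, ⟨t, ht, rfl⟩, rfl⟩
    have hx : v + lam • (p + ∑ i, t i • b i) = (v + lam • p) + b.equivFun.symm (fun i => lam * t i) := by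
      rw [b.equivFun_symm_apply]
      rw [smul_add, Finset.smul_sum]
      simp [smul_smul, add_assoc]
    intro i
    rw [hx]
    simp only [map_add, LinearEquiv.apply_symm_apply, Pi.add_apply]
    have h0 := (ht i).1
    have h1 := (ht i).2
    constructor
    · nlinarith
    · nlinarith
  · intro h
    refine ⟨p + ∑ i, (fun i => (b.equivFun x i - b.equivFun (v + lam • p) i) / lam) i • b i,
      ⟨_, fun i => ⟨?_, ?_⟩, rfl⟩, ?_⟩
    · exact div_nonneg (by linarith [(h i).1]) hlam.le
    · rw [div_le_one hlam]; linarith [(h i).2]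
    · have : (∑ i, ((b.equivFun x i - b.equivFun (v + lam • p) i) / lam) • b i)
          = b.equivFun.symm (fun i => (b.equivFun x i - b.equivFun (v + lam • p) i) / lam) := by
        rw [b.equivFun_symm_apply]
      rw [smul_add, this, ← add_assoc]
      have : lam • b.equivFun.symm (fun i => (b.equivFun x i - b.equivFun (v + lam • p) i) / lam)
          = x - (v + lam • p) := by
        rw [← map_smul]
        have : (lam • fun i => (b.equivFun x i - b.equivFun (v + lam • p) i) / lam)
            = fun i => b.equivFun x i - b.equivFun (v + lam • p) i := by
          funext i; simp [smul_eq_mul]; field_simp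
        rw [this]
        have : (fun i => b.equivFun x i - b.equivFun (v + lam • p) i)
            = b.equivFun (x - (v + lam • p)) := by
          funext i; simp
        rw [this, LinearEquiv.symm_apply_apply]
      rw [this]; abel

/-- the 2^d corner points of a homothet -/
noncomputable def hcorner (d : ℕ) (b : Module.Basis (Fin d) ℝ (EuclideanSpace ℝ (Fin d)))
    (p : EuclideanSpace ℝ (Fin d)) (s : ℝ × EuclideanSpace ℝ (Fin d)) (ε : Fin d → Bool) :
    EuclideanSpace ℝ (Fin d) :=
  b.equivFun.symm (fun i => b.equivFun (s.2 + s.1 • p) i + if ε i then s.1 else 0)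

lemma corner_pierce (d : ℕ) (b : Module.Basis (Fin d) ℝ (EuclideanSpace ℝ (Fin d)))
    (p : EuclideanSpace ℝ (Fin d))
    (P : Set (EuclideanSpace ℝ (Fin d)))
    (hP : P = {x | ∃ t : Fin d → ℝ, (∀ i, t i ∈ Set.Icc (0 : ℝ) 1) ∧
            x = p + ∑ i, t i • b i})
    (s s' : ℝ × EuclideanSpace ℝ (Fin d)) (hs : 0 < s.1) (hs' : 0 < s'.1)
    (hle : s.1 ≤ s'.1)
    (hnd : ¬ Disjoint (s.2 +ᵥ s.1 • P) (s'.2 +ᵥ s'.1 • P)) :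
    ∃ ε : Fin d → Bool, hcorner d b p s ε ∈ s'.2 +ᵥ s'.1 • P := by
  obtain ⟨y, hy, hy'⟩ := Set.not_disjoint_iff.mp hnd
  rw [mem_homothet_iff d b p P hP s.1 hs] at hy
  rw [mem_homothet_iff d b p P hP s'.1 hs'] at hy'
  set c := b.equivFun (s.2 + s.1 • p) with hc
  set c' := b.equivFun (s'.2 + s'.1 • p) with hc'
  refine ⟨fun i => decide (c i < c' i), ?_⟩
  rw [mem_homothet_iff d b p P hP s'.1 hs']
  intro i
  rw [hcorner, ← hc, ← hc', LinearEquiv.apply_symm_apply]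
  have h1 := hy i
  have h2 := hy' i
  by_cases h : c i < c' i
  · rw [if_pos (decide_eq_true h)]
    constructor <;> linarith
  · rw [if_neg (by simp [h] : ¬(decide (c i < c' i) = true))]
    simp only [add_zero]
    constructor <;> linarith

/-- For every dimension `d ≥ 2`, every parallelepiped
`P = p + {∑ tᵢ bᵢ : tᵢ ∈ [0,1]}` in `ℝ^d`, and every finite family of positive homothets
of `P`, `τ(F) ≤ 2^d · ν(F)`. -/
theorem piercing_homothets_parallelepiped
    (d : ℕ) (hd : 2 ≤ d)
    (b : Module.Basis (Fin d) ℝ (EuclideanSpace ℝ (Fin d)))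
    (p : EuclideanSpace ℝ (Fin d))
    (P : Set (EuclideanSpace ℝ (Fin d)))
    (hP : P = {x | ∃ t : Fin d → ℝ, (∀ i, t i ∈ Set.Icc (0 : ℝ) 1) ∧
            x = p + ∑ i, t i • b i})
    (S : Finset (ℝ × EuclideanSpace ℝ (Fin d)))
    (hS : ∀ s ∈ S, 0 < s.1) :
    ∃ (Q : Finset (EuclideanSpace ℝ (Fin d))) (W : Finset (ℝ × EuclideanSpace ℝ (Fin d))),
      W ⊆ S ∧
      (∀ s ∈ S, ∃ x ∈ Q, x ∈ s.2 +ᵥ s.1 • P) ∧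
      ((W : Set (ℝ × EuclideanSpace ℝ (Fin d))).Pairwise fun s s' =>
        Disjoint (s.2 +ᵥ s.1 • P) (s'.2 +ᵥ s'.1 • P)) ∧
      Q.card ≤ 2 ^ d * W.card := by
  classical
  induction S using Finset.strongInduction with
  | _ S ih =>
  rcases S.eq_empty_or_nonempty with rfl | hne
  · exact ⟨∅, ∅, by simp⟩
  obtain ⟨s, hsS, hmin⟩ := S.exists_min_image Prod.fst hne
  have hspos := hS s hsS
  -- the homothet of s is nonempty
  have hself : s.2 + s.1 • p ∈ s.2 +ᵥ s.1 • P := by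
    rw [mem_homothet_iff d b p P hP s.1 hspos]
    intro i; exact ⟨le_refl _, by linarith⟩
  set T := S.filter (fun s' => Disjoint (s.2 +ᵥ s.1 • P) (s'.2 +ᵥ s'.1 • P)) with hT
  have hTsub : T ⊆ S := Finset.filter_subset _ _
  have hsnT : s ∉ T := by
    intro h
    have := (Finset.mem_filter.mp h).2
    exact absurd (disjoint_self.mp this) (Set.nonempty_iff_ne_empty.mp ⟨_, hself⟩)
  have hssub : T ⊂ S := lt_of_le_of_ne hTsub (fun h => hsnT (h ▸ hsS))
  obtain ⟨Q', W', hWS', hpierce', hdisj', hcard'⟩ := ih T hssub (fun s' hs' => hS s' (hTsub hs'))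
  set C := Finset.image (fun ε : Fin d → Bool => hcorner d b p s ε) Finset.univ with hC
  refine ⟨Q' ∪ C, insert s W', ?_, ?_, ?_, ?_⟩
  · exact Finset.insert_subset hsS (hWS'.trans hTsub)
  · intro s' hs'
    by_cases hmem : s' ∈ T
    · obtain ⟨x, hx, hxm⟩ := hpierce' s' hmem
      exact ⟨x, Finset.mem_union_left _ hx, hxm⟩
    · have hnd : ¬ Disjoint (s.2 +ᵥ s.1 • P) (s'.2 +ᵥ s'.1 • P) := by
        intro h; exact hmem (Finset.mem_filter.mpr ⟨hs', h⟩)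
      obtain ⟨ε, hε⟩ := corner_pierce d b p P hP s s' hspos (hS s' hs') (hmin s' hs') hnd
      exact ⟨hcorner d b p s ε, Finset.mem_union_right _
        (Finset.mem_image.mpr ⟨ε, Finset.mem_univ _, rfl⟩), hε⟩
  · rw [Finset.coe_insert]
    haveI : Std.Symm (fun s s' : ℝ × EuclideanSpace ℝ (Fin d) =>
        Disjoint (s.2 +ᵥ s.1 • P) (s'.2 +ᵥ s'.1 • P)) := ⟨fun a c h => h.symm⟩
    rw [Set.pairwise_insert_of_symm]
    refine ⟨hdisj', fun w hw _ => ?_⟩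
    exact (Finset.mem_filter.mp (hWS' hw)).2
  · have hCcard : C.card ≤ 2 ^ d := by
      calc C.card ≤ (Finset.univ : Finset (Fin d → Bool)).card := Finset.card_image_le
      _ = 2 ^ d := by simp [Finset.card_univ]
    have hsnW : s ∉ W' := fun h => hsnT (hWS' h)
    rw [Finset.card_insert_of_notMem hsnW]
    calc (Q' ∪ C).card ≤ Q'.card + C.card := Finset.card_union_le _ _
    _ ≤ 2 ^ d * W'.card + 2 ^ d := by omega
    _ = 2 ^ d * (W'.card + 1) := by ring
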